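/- Let A be a finite set with distinguished elements x, ⊥, g and a copy of {1,...,k} (k prime, k > 5), and let T ⊆ {1,...,k} with |T| = ⌈4k/5⌉. Define v_T(S) = (1/40)·1[S \ {⊥,g} ≠ ∅] + 1[⊥ ∈ S] + 1[g ∈ S] + (1/(80k))·w(S), where w(S) = 0 if S = ∅; w(S) = 1 if 0 < |S \ {⊥,g,x}| < 4k/5 or S \ {⊥,g,x} ∈ cyclic(T); w(S) = 2 if |S \ {⊥,g,x}| > 4k/5 and S \ {⊥,g,x} ∉ cyclic(T). Then v_T is an XOS (fractionally subadditive) function. -/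

import Mathlib

/-- The action set of the hard instance: `⊥`, `g`, `x`, and `k` actions `1,…,k`. -/
inductive HardAction (k : ℕ) where
  | bot | g | x
  | act (i : Fin k)
deriving DecidableEq, Fintype

/-- All cyclic shifts of a subset `T` of `ℤ/k` (identified with `Fin k`). -/
def cyclicShifts {k : ℕ} (T : Finset (Fin k)) : Finset (Finset (Fin k)) :=
  Finset.univ.image (fun t : Fin k => T.image (fun j => j + t))

/-- The part of `S` coming from the `k` actions `1,…,k`, i.e. `S \ {⊥, g, x}`. -/
def kPart {k : ℕ} (S : Finset (HardAction k)) : Finset (Fin k) :=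
  Finset.univ.filter (fun i => HardAction.act i ∈ S)

/-- The inspection cost function `v_T` of the hard instance. -/
noncomputable def vT {k : ℕ} (T : Finset (Fin k)) (S : Finset (HardAction k)) : ℝ :=
  (if (S \ {HardAction.bot, HardAction.g}).Nonempty then 1/40 else 0)
  + (if HardAction.bot ∈ S then 1 else 0) + (if HardAction.g ∈ S then 1 else 0)
  + (1 / (80 * (k : ℝ))) *
    (if kPart S = ∅ then 0
     else if ((kPart S).card : ℝ) < 4 * (k : ℝ) / 5 ∨ kPart S ∈ cyclicShifts T then 1
     else 2)

namespace Stmt8Aux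

open Finset

variable {k : ℕ}

/-- Natural-number valued version of the `w` weight in `vT`. -/
noncomputable def wN (T : Finset (Fin k)) (P : Finset (Fin k)) : ℕ :=
  if P = ∅ then 0
  else if ((P.card : ℝ) < 4 * (k : ℝ) / 5 ∨ P ∈ cyclicShifts T) then 1
  else 2

lemma vT_eq (T : Finset (Fin k)) (S : Finset (HardAction k)) :
    vT T S = (if (S \ {HardAction.bot, HardAction.g}).Nonempty then 1/40 else 0)
      + (if HardAction.bot ∈ S then 1 else 0) + (if HardAction.g ∈ S then 1 else 0)
      + (1 / (80 * (k : ℝ))) * ((wN T (kPart S) : ℕ) : ℝ) := by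
  unfold vT wN
  split_ifs <;> norm_num

lemma wN_le (T P : Finset (Fin k)) : wN T P ≤ 2 := by
  unfold wN; split_ifs <;> omega

lemma wN_pos (T : Finset (Fin k)) {P : Finset (Fin k)} (h : P.Nonempty) : 1 ≤ wN T P := by
  unfold wN
  rw [if_neg (Finset.nonempty_iff_ne_empty.mp h)]
  split_ifs <;> omega

/-- The supporting additive function for the set `S₀`. -/
noncomputable def gam (T : Finset (Fin k)) (S₀ : Finset (HardAction k)) :
    HardAction k → ℝ := fun a =>
  match a with
  | .bot => 1
  | .g => 1
  | .x => if HardAction.x ∈ S₀ ∧ kPart S₀ = ∅ then 1/40 else 0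
  | .act j => if j ∈ kPart S₀ then
      (1/40 + (1 / (80 * (k : ℝ))) * ((wN T (kPart S₀) : ℕ) : ℝ)) / ((kPart S₀).card : ℝ)
    else 0

lemma gam_nonneg (T : Finset (Fin k)) (S₀ : Finset (HardAction k)) (a : HardAction k) :
    0 ≤ gam T S₀ a := by
  cases a <;> simp only [gam]
  · norm_num
  · norm_num
  · split_ifs <;> norm_num
  · split_ifs with h
    · positivity
    · exact le_refl 0

lemma kPart_empty : kPart (∅ : Finset (HardAction k)) = ∅ := by
  ext i; simp [kPart]

lemma kPart_insert_bot (S : Finset (HardAction k)) :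
    kPart (insert HardAction.bot S) = kPart S := by
  ext i; simp [kPart]

lemma kPart_insert_g (S : Finset (HardAction k)) :
    kPart (insert HardAction.g S) = kPart S := by
  ext i; simp [kPart]

lemma kPart_insert_x (S : Finset (HardAction k)) :
    kPart (insert HardAction.x S) = kPart S := by
  ext i; simp [kPart]

lemma kPart_insert_act (j : Fin k) (S : Finset (HardAction k)) :
    kPart (insert (HardAction.act j) S) = insert j (kPart S) := by
  ext i; simp [kPart, eq_comm]

/-- Splitting a sum over a finset of actions according to the four kinds. -/
lemma sum_split (f : HardAction k → ℝ) (S : Finset (HardAction k)) :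
    ∑ a ∈ S, f a = (if HardAction.bot ∈ S then f HardAction.bot else 0)
      + (if HardAction.g ∈ S then f HardAction.g else 0)
      + (if HardAction.x ∈ S then f HardAction.x else 0)
      + ∑ j ∈ kPart S, f (HardAction.act j) := by
  induction S using Finset.induction with
  | empty => simp [kPart_empty]
  | @insert a s ha ih =>
    rw [Finset.sum_insert ha]
    cases a with
    | bot =>
      have hb : HardAction.bot ∉ s := ha
      rw [kPart_insert_bot, ih]
      simp only [Finset.mem_insert, reduceCtorEq, false_or, if_neg hb, true_or, if_true]
      ring
    | g =>
      have hb : HardAction.g ∉ s := ha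
      rw [kPart_insert_g, ih]
      simp only [Finset.mem_insert, reduceCtorEq, false_or, if_neg hb, true_or, if_true]
      ring
    | x =>
      have hb : HardAction.x ∉ s := ha
      rw [kPart_insert_x, ih]
      simp only [Finset.mem_insert, reduceCtorEq, false_or, if_neg hb, true_or, if_true]
      ring
    | act j =>
      have hj : j ∉ kPart s := by
        simp only [kPart, Finset.mem_filter, Finset.mem_univ, true_and]
        exact ha
      rw [kPart_insert_act, Finset.sum_insert hj, ih]
      simp only [Finset.mem_insert, reduceCtorEq, false_or]
      ring

/-- The value of a supporting function on a set. -/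
lemma gam_sum (T : Finset (Fin k)) (S₀ S : Finset (HardAction k)) :
    ∑ a ∈ S, gam T S₀ a
      = (if HardAction.bot ∈ S then (1:ℝ) else 0)
      + (if HardAction.g ∈ S then (1:ℝ) else 0)
      + (if HardAction.x ∈ S then
          (if HardAction.x ∈ S₀ ∧ kPart S₀ = ∅ then (1:ℝ)/40 else 0) else 0)
      + ((kPart S ∩ kPart S₀).card : ℝ) *
          ((1/40 + (1 / (80 * (k : ℝ))) * ((wN T (kPart S₀) : ℕ) : ℝ))
            / ((kPart S₀).card : ℝ)) := by
  rw [sum_split]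
  congr 1
  simp only [gam]
  rw [Finset.sum_ite_mem, Finset.sum_const, nsmul_eq_mul]

lemma sdiff_nonempty_iff (S : Finset (HardAction k)) :
    (S \ {HardAction.bot, HardAction.g}).Nonempty ↔
      HardAction.x ∈ S ∨ (kPart S).Nonempty := by
  constructor
  · rintro ⟨a, ha⟩
    rw [Finset.mem_sdiff] at ha
    obtain ⟨haS, hanot⟩ := ha
    cases a with
    | bot => exact absurd (by simp) hanot
    | g => exact absurd (by simp) hanot
    | x => exact Or.inl haS
    | act j => exact Or.inr ⟨j, by simp [kPart, haS]⟩
  · rintro (hx | ⟨j, hj⟩)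
    · exact ⟨HardAction.x, Finset.mem_sdiff.mpr ⟨hx, by simp⟩⟩
    · refine ⟨HardAction.act j, Finset.mem_sdiff.mpr ⟨?_, by simp⟩⟩
      simpa [kPart] using hj

/-- Exactness: the supporting function for `S` sums to `vT T S` on `S`. -/
lemma gam_exact (T : Finset (Fin k)) (S : Finset (HardAction k)) :
    ∑ a ∈ S, gam T S a = vT T S := by
  rw [gam_sum, vT_eq]
  rw [Finset.inter_self]
  by_cases hP : kPart S = ∅
  · have hind : (S \ {HardAction.bot, HardAction.g}).Nonempty ↔ HardAction.x ∈ S := by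
      rw [sdiff_nonempty_iff]
      simp [hP, Finset.nonempty_iff_ne_empty]
    have hw : wN T (∅ : Finset (Fin k)) = 0 := by simp [wN]
    rw [hP, hw]
    simp only [Finset.card_empty, Nat.cast_zero, zero_mul, mul_zero, add_zero,
      eq_self_iff_true, and_true]
    by_cases hx : HardAction.x ∈ S <;> simp [hx, hind] <;> ring
  · have hPne : (kPart S).Nonempty := Finset.nonempty_iff_ne_empty.mpr hP
    have hind : (S \ {HardAction.bot, HardAction.g}).Nonempty := by
      rw [sdiff_nonempty_iff]; exact Or.inr hPne
    have hcard : ((kPart S).card : ℝ) ≠ 0 := by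
      simp [Finset.card_eq_zero, hP]
    rw [if_pos hind]
    have hx : ¬(HardAction.x ∈ S ∧ kPart S = ∅) := by tauto
    rw [mul_div_cancel₀ _ hcard]
    simp only [hx, if_false, ite_self]
    ring

lemma arith {m p : ℕ} (h1 : m < p) (h2 : m ≤ 2 * k + 1) :
    m * (2 * k + 2) ≤ p * (2 * k + 1) := by nlinarith

lemma card_of_mem_cyclic (hk0 : k ≠ 0) {T P : Finset (Fin k)}
    (h : P ∈ cyclicShifts T) : P.card = T.card := by
  haveI : NeZero k := ⟨hk0⟩
  obtain ⟨t, _, rfl⟩ := Finset.mem_image.mp h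
  exact Finset.card_image_of_injective _ (add_left_injective t)

/-- The key combinatorial inequality. -/
lemma key (hk5 : 5 < k) (T : Finset (Fin k)) (hT : T.card = ⌈(4 * (k : ℚ) / 5)⌉₊)
    (P₀ P' : Finset (Fin k)) (hm : ((P' ∩ P₀)).Nonempty) :
    (P' ∩ P₀).card * (2 * k + wN T P₀) ≤ P₀.card * (2 * k + wN T P') := by
  have hk0 : k ≠ 0 := by omega
  have hP₀ne : P₀.Nonempty := by
    obtain ⟨a, ha⟩ := hm
    exact ⟨a, (Finset.mem_inter.mp ha).2⟩
  have hP'ne : P'.Nonempty := by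
    obtain ⟨a, ha⟩ := hm
    exact ⟨a, (Finset.mem_inter.mp ha).1⟩
  have hmp : (P' ∩ P₀).card ≤ P₀.card := Finset.card_le_card (Finset.inter_subset_right)
  have hw' : 1 ≤ wN T P' := wN_pos T hP'ne
  -- T.card facts
  have hNle : (4 * (k : ℝ) / 5) ≤ (T.card : ℝ) := by
    rw [hT]
    have h1 : (4 * (k : ℚ) / 5) ≤ ((⌈(4 * (k : ℚ) / 5)⌉₊ : ℕ) : ℚ) := Nat.le_ceil _
    have h2 := (Rat.cast_le (K := ℝ)).mpr h1
    push_cast at h2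
    convert h2 using 2
  have hNk : T.card ≤ k := by
    rw [hT]
    apply Nat.ceil_le.mpr
    rw [div_le_iff₀ (by norm_num)]
    push_cast
    nlinarith [(by exact_mod_cast Nat.zero_le k : (0:ℚ) ≤ (k:ℚ))]
  have hpk : P₀.card ≤ k := by
    calc P₀.card ≤ (Finset.univ : Finset (Fin k)).card := Finset.card_le_univ _
    _ = k := by simp
  by_cases hc0 : ((P₀.card : ℝ) < 4 * (k : ℝ) / 5 ∨ P₀ ∈ cyclicShifts T)
  · -- wN T P₀ = 1
    have hw0 : wN T P₀ = 1 := by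
      unfold wN
      rw [if_neg (Finset.nonempty_iff_ne_empty.mp hP₀ne), if_pos hc0]
    rw [hw0]
    exact Nat.mul_le_mul hmp (by omega)
  · -- wN T P₀ = 2
    have hw0 : wN T P₀ = 2 := by
      unfold wN
      rw [if_neg (Finset.nonempty_iff_ne_empty.mp hP₀ne), if_neg hc0]
    push_neg at hc0
    obtain ⟨hbig, hnotcyc⟩ := hc0
    have hNp : T.card ≤ P₀.card := by
      rw [hT]
      apply Nat.ceil_le.mpr
      have h : (4 * (k : ℝ) / 5) ≤ (P₀.card : ℝ) := hbig
      have h2 : ((4 * (k : ℚ) / 5 : ℚ) : ℝ) ≤ (((P₀.card : ℚ)) : ℝ) := by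
        push_cast
        convert h using 2
      exact_mod_cast h2
    by_cases hc' : ((P'.card : ℝ) < 4 * (k : ℝ) / 5 ∨ P' ∈ cyclicShifts T)
    · -- wN T P' = 1 : the hard case
      have hw1 : wN T P' = 1 := by
        unfold wN
        rw [if_neg (Finset.nonempty_iff_ne_empty.mp hP'ne), if_pos hc']
      rw [hw0, hw1]
      have hmlt : (P' ∩ P₀).card < P₀.card := by
        rcases hc' with hsmall | hcyc
        · -- |P'| < 4k/5 ≤ |P₀|
          have : ((P' ∩ P₀).card : ℝ) < (P₀.card : ℝ) := by
            calc ((P' ∩ P₀).card : ℝ) ≤ (P'.card : ℝ) := by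
                  exact_mod_cast Finset.card_le_card Finset.inter_subset_left
              _ < 4 * (k : ℝ) / 5 := hsmall
              _ ≤ (P₀.card : ℝ) := hbig
          exact_mod_cast this
        · -- P' is a cyclic shift
          have hcard' : P'.card = T.card := card_of_mem_cyclic hk0 hcyc
          have hle : (P' ∩ P₀).card ≤ P'.card :=
            Finset.card_le_card Finset.inter_subset_left
          rcases lt_or_eq_of_le hle with hlt | heq
          · omega
          · -- P' ⊆ P₀
            have hsub : P' ⊆ P₀ := by
              have : P' ∩ P₀ = P' :=
                Finset.eq_of_subset_of_card_le Finset.inter_subset_left (le_of_eq heq.symm)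
              rw [← this]; exact Finset.inter_subset_right
            have hne : P' ≠ P₀ := by
              rintro rfl; exact hnotcyc hcyc
            have : P'.card < P₀.card :=
              Finset.card_lt_card (Finset.ssubset_iff_subset_ne.mpr ⟨hsub, hne⟩)
            omega
      exact arith hmlt (by omega)
    · -- wN T P' = 2
      have hw2 : wN T P' = 2 := by
        unfold wN
        rw [if_neg (Finset.nonempty_iff_ne_empty.mp hP'ne), if_neg hc']
      rw [hw0, hw2]
      exact Nat.mul_le_mul_right _ hmp

/-- Domination: every supporting function is pointwise below `vT`. -/
lemma gam_dom (hk5 : 5 < k) (T : Finset (Fin k)) (hT : T.card = ⌈(4 * (k : ℚ) / 5)⌉₊)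
    (S₀ S : Finset (HardAction k)) :
    ∑ a ∈ S, gam T S₀ a ≤ vT T S := by
  have hkR : (0:ℝ) < (k : ℝ) := by
    have : 0 < k := by omega
    exact_mod_cast this
  have hc : (0:ℝ) < 1 / (80 * (k : ℝ)) := by positivity
  rw [gam_sum, vT_eq]
  have hwnn : (0:ℝ) ≤ (1 / (80 * (k : ℝ))) * ((wN T (kPart S) : ℕ) : ℝ) := by positivity
  have hind0 : (0:ℝ) ≤
      (if (S \ {HardAction.bot, HardAction.g}).Nonempty then (1:ℝ)/40 else 0) := by
    split_ifs <;> norm_num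
  suffices h : (if HardAction.x ∈ S then
        (if HardAction.x ∈ S₀ ∧ kPart S₀ = ∅ then (1:ℝ)/40 else 0) else 0)
      + ((kPart S ∩ kPart S₀).card : ℝ) *
          ((1/40 + (1 / (80 * (k : ℝ))) * ((wN T (kPart S₀) : ℕ) : ℝ))
            / ((kPart S₀).card : ℝ))
      ≤ (if (S \ {HardAction.bot, HardAction.g}).Nonempty then (1:ℝ)/40 else 0)
      + (1 / (80 * (k : ℝ))) * ((wN T (kPart S) : ℕ) : ℝ) by
    linarith
  by_cases hP0 : kPart S₀ = ∅
  · rw [hP0]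
    simp only [Finset.inter_empty, Finset.card_empty, Nat.cast_zero, zero_mul, add_zero]
    by_cases hx : HardAction.x ∈ S
    · have hne : (S \ {HardAction.bot, HardAction.g}).Nonempty :=
        (sdiff_nonempty_iff S).mpr (Or.inl hx)
      rw [if_pos hx, if_pos hne]
      split_ifs <;> linarith
    · rw [if_neg hx]; linarith
  · have hx : ¬(HardAction.x ∈ S₀ ∧ kPart S₀ = ∅) := fun h => hP0 h.2
    simp only [hx, if_false, ite_self]
    by_cases hm : (kPart S ∩ kPart S₀) = ∅
    · rw [hm]
      simp only [Finset.card_empty, Nat.cast_zero, zero_mul, zero_add]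
      linarith
    · have hmne : (kPart S ∩ kPart S₀).Nonempty := Finset.nonempty_iff_ne_empty.mpr hm
      have hSne : (kPart S).Nonempty := by
        obtain ⟨a, ha⟩ := hmne
        exact ⟨a, (Finset.mem_inter.mp ha).1⟩
      have hne : (S \ {HardAction.bot, HardAction.g}).Nonempty :=
        (sdiff_nonempty_iff S).mpr (Or.inr hSne)
      rw [if_pos hne, zero_add]
      have hp : (0:ℝ) < ((kPart S₀).card : ℝ) := by
        have := Finset.card_pos.mpr (Finset.nonempty_iff_ne_empty.mpr hP0)
        exact_mod_cast this
      have h40 : (1:ℝ)/40 = (1 / (80 * (k : ℝ))) * (2 * (k:ℝ)) := by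
        field_simp
        ring
      have hkey := key hk5 T hT (kPart S₀) (kPart S) hmne
      have hkeyR : ((kPart S ∩ kPart S₀).card : ℝ) * (2 * (k:ℝ) + (wN T (kPart S₀) : ℕ))
          ≤ ((kPart S₀).card : ℝ) * (2 * (k:ℝ) + (wN T (kPart S) : ℕ)) := by
        exact_mod_cast hkey
      rw [h40]
      set c := 1 / (80 * (k : ℝ)) with hcdef
      have hp' : ((kPart S₀).card : ℝ) ≠ 0 := ne_of_gt hp
      calc ((kPart S ∩ kPart S₀).card : ℝ) *
            ((c * (2 * (k:ℝ)) + c * ((wN T (kPart S₀) : ℕ) : ℝ)) / ((kPart S₀).card : ℝ))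
          = (c * (((kPart S ∩ kPart S₀).card : ℝ) *
              (2 * (k:ℝ) + ((wN T (kPart S₀) : ℕ) : ℝ)))) / ((kPart S₀).card : ℝ) := by
            ring
        _ ≤ (c * (((kPart S₀).card : ℝ) *
              (2 * (k:ℝ) + ((wN T (kPart S) : ℕ) : ℝ)))) / ((kPart S₀).card : ℝ) := by
            apply div_le_div_of_nonneg_right ?_ hp.le
            exact mul_le_mul_of_nonneg_left hkeyR hc.le
        _ = c * (2 * (k:ℝ)) + c * ((wN T (kPart S) : ℕ) : ℝ) := by
            field_simp

end Stmt8Aux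

/-- `v_T` is XOS: a pointwise maximum of finitely many nonnegative additive functions. -/
theorem stmt8 (k : ℕ) (hk : Nat.Prime k) (hk5 : 5 < k)
    (T : Finset (Fin k)) (hT : T.card = ⌈(4 * (k : ℚ) / 5)⌉₊) :
    ∃ (γs : Finset (HardAction k → ℝ)) (hne : γs.Nonempty),
      (∀ γ ∈ γs, ∀ a, 0 ≤ γ a) ∧
      ∀ S : Finset (HardAction k), vT T S = γs.sup' hne (fun γ => ∑ a ∈ S, γ a) := by
  classical
  refine ⟨Finset.univ.image (fun S₀ : Finset (HardAction k) => Stmt8Aux.gam T S₀),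
    Finset.image_nonempty.mpr Finset.univ_nonempty, ?_, ?_⟩
  · intro γ hγ a
    obtain ⟨S₀, _, rfl⟩ := Finset.mem_image.mp hγ
    exact Stmt8Aux.gam_nonneg T S₀ a
  · intro S
    apply le_antisymm
    · have hmem : Stmt8Aux.gam T S ∈
          Finset.univ.image (fun S₀ : Finset (HardAction k) => Stmt8Aux.gam T S₀) :=
        Finset.mem_image_of_mem _ (Finset.mem_univ S)
      calc vT T S = ∑ a ∈ S, Stmt8Aux.gam T S a := (Stmt8Aux.gam_exact T S).symm
        _ ≤ _ := Finset.le_sup' (fun γ => ∑ a ∈ S, γ a) hmem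
    · apply Finset.sup'_le
      intro γ hγ
      obtain ⟨S₀, _, rfl⟩ := Finset.mem_image.mp hγ
      exact Stmt8Aux.gam_dom hk5 T hT S₀ S
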